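/- The kernel of ψ equals the ideal of ℂ[x,y,z,t] generated by the six polynomials f = x³z + xyt − z³ + t², g = x²yz − xzt + y²t, h = x⁵ − x²z² + 2xy²z − y⁴, q₂₁ = x³t − xyz² + y³z, q₂₂ = −xt² + y²z², q₂₃ = −x²zt + yz³ − yt². -/

import Mathlib

noncomputable section

open MvPolynomial

namespace Reid

abbrev A : Type := MvPolynomial (Fin 4) ℂ
abbrev B : Type := MvPolynomial (Fin 2) ℂ

def u : B := X 0
def v : B := X 1

/-- The ℂ-algebra homomorphism `ψ : ℂ[x,y,z,t] → ℂ[u,v]` with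
`ψ(x) = u²`, `ψ(y) = uv`, `ψ(z) = u³ + v²`, `ψ(t) = u³v + v³`. -/
def ψ : A →ₐ[ℂ] B := aeval ![u ^ 2, u * v, u ^ 3 + v ^ 2, u ^ 3 * v + v ^ 3]

def x : A := X 0
def y : A := X 1
def z : A := X 2
def t : A := X 3

def f : A := x ^ 3 * z + x * y * t - z ^ 3 + t ^ 2
def g : A := x ^ 2 * y * z - x * z * t + y ^ 2 * t
def h : A := x ^ 5 - x ^ 2 * z ^ 2 + 2 * x * y ^ 2 * z - y ^ 4
def q21 : A := x ^ 3 * t - x * y * z ^ 2 + y ^ 3 * z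
def q22 : A := -(x * t ^ 2) + y ^ 2 * z ^ 2
def q23 : A := -(x ^ 2 * z * t) + y * z ^ 3 - y * t ^ 2

abbrev C2 : Type := MvPolynomial (Fin 2) ℂ
def ι : C2 →ₐ[ℂ] A := aeval ![x, z]
def I0 : Ideal A := Ideal.span {f, g, h, q21, q22, q23}

lemma ψx : ψ x = u ^ 2 := by simp [ψ, x]
lemma ψy : ψ y = u * v := by simp [ψ, y]
lemma ψz : ψ z = u ^ 3 + v ^ 2 := by simp [ψ, z]
lemma ψt : ψ t = u ^ 3 * v + v ^ 3 := by simp [ψ, t]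

lemma ψf : ψ f = 0 := by simp only [f, map_add, map_sub, map_mul, map_pow, ψx, ψy, ψz, ψt]; ring
lemma ψg : ψ g = 0 := by simp only [g, map_add, map_sub, map_mul, map_pow, ψx, ψy, ψz, ψt]; ring
lemma ψh : ψ h = 0 := by
  simp only [h, map_add, map_sub, map_mul, map_pow, map_ofNat, ψx, ψy, ψz, ψt]; ring
lemma ψq21 : ψ q21 = 0 := by
  simp only [q21, map_add, map_sub, map_mul, map_pow, ψx, ψy, ψz, ψt]; ring
lemma ψq22 : ψ q22 = 0 := by
  simp only [q22, map_add, map_neg, map_mul, map_pow, ψx, ψy, ψz, ψt]; ring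
lemma ψq23 : ψ q23 = 0 := by
  simp only [q23, map_add, map_sub, map_neg, map_mul, map_pow, ψx, ψy, ψz, ψt]; ring

lemma I0_le_ker : I0 ≤ RingHom.ker (ψ : A →+* B) := by
  rw [I0, Ideal.span_le]
  rintro p (rfl | rfl | rfl | rfl | rfl | rfl) <;>
    simp [RingHom.mem_ker, ψf, ψg, ψh, ψq21, ψq22, ψq23]

lemma ιX0 : ι (X 0) = x := by simp [ι]
lemma ιX1 : ι (X 1) = z := by simp [ι]

lemma aeval_eq_eval {n : ℕ} (w : Fin n → ℂ) (p : MvPolynomial (Fin n) ℂ) :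
    (aeval w p : ℂ) = eval w p := by
  rw [← coe_aeval_eq_eval]; rfl

lemma eval_psi (p : A) (μ ν : ℂ) :
    eval ![μ, ν] (ψ p) = eval ![μ^2, μ*ν, μ^3+ν^2, μ^3*ν+ν^3] p := by
  have h2 : ((aeval ![μ, ν] : B →ₐ[ℂ] ℂ).comp ψ)
      = (aeval ![μ^2, μ*ν, μ^3+ν^2, μ^3*ν+ν^3] : A →ₐ[ℂ] ℂ) := by
    apply MvPolynomial.algHom_ext
    intro i
    fin_cases i <;> simp [ψ, u, v]
  have h3 := DFunLike.congr_fun h2 p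
  simpa only [AlgHom.coe_comp, Function.comp_apply, aeval_eq_eval] using h3

lemma eval_iota (c : C2) (w : Fin 4 → ℂ) :
    eval w (ι c) = eval ![w 0, w 2] c := by
  have h2 : ((aeval w : A →ₐ[ℂ] ℂ).comp ι) = (aeval ![w 0, w 2] : C2 →ₐ[ℂ] ℂ) := by
    apply MvPolynomial.algHom_ext
    intro i
    fin_cases i <;> simp [ι, x, z]
  have h3 := DFunLike.congr_fun h2 c
  simpa only [AlgHom.coe_comp, Function.comp_apply, aeval_eq_eval] using h3


lemma fI : f ∈ I0 := Ideal.subset_span (by simp)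
lemma gI : g ∈ I0 := Ideal.subset_span (by simp)
lemma hI : h ∈ I0 := Ideal.subset_span (by simp)
lemma q21I : q21 ∈ I0 := Ideal.subset_span (by simp)
lemma q22I : q22 ∈ I0 := Ideal.subset_span (by simp)
lemma q23I : q23 ∈ I0 := Ideal.subset_span (by simp)

def Std (p : A) : Prop := ∃ c00 c10 c20 c30 c01 c11 : C2, ∃ q ∈ I0,
  p = ι c00 + ι c10 * y + ι c20 * y^2 + ι c30 * y^3 + ι c01 * t + ι c11 * (y*t) + q

lemma std_all (p : A) : Std p := by
  induction p using MvPolynomial.induction_on with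
  | C a =>
      exact ⟨C a, 0, 0, 0, 0, 0, 0, I0.zero_mem, by simp [ι]⟩
  | add p q hp hq =>
      obtain ⟨a0, a1, a2, a3, a4, a5, qa, hqa, rfl⟩ := hp
      obtain ⟨b0, b1, b2, b3, b4, b5, qb, hqb, rfl⟩ := hq
      exact ⟨a0 + b0, a1 + b1, a2 + b2, a3 + b3, a4 + b4, a5 + b5, qa + qb,
        I0.add_mem hqa hqb, by simp only [map_add]; ring⟩
  | mul_X p i hp =>
      obtain ⟨a0, a1, a2, a3, a4, a5, q, hq, rfl⟩ := hp
      fin_cases i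
      · -- multiply by x
        exact ⟨X 0 * a0, X 0 * a1, X 0 * a2, X 0 * a3, X 0 * a4, X 0 * a5, q * x,
          Ideal.mul_mem_right _ _ hq,
          by simp only [show (X (⟨0, by omega⟩ : Fin 4) : A) = x from rfl, map_mul, ιX0]; ring⟩
      · -- multiply by y
        refine ⟨(X 0^5 - X 0^2 * X 1^2) * a3, a0 - X 0^2 * X 1 * a5,
          a1 + 2 * X 0 * X 1 * a3, a2, X 0 * X 1 * a5, a4,
          q * y - ι a3 * h + ι a5 * g,
          ?_, ?_⟩
        · exact I0.add_mem (I0.sub_mem (Ideal.mul_mem_right _ _ hq)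
            (Ideal.mul_mem_left _ _ hI)) (Ideal.mul_mem_left _ _ gI)
        · simp only [show (X (⟨1, by omega⟩ : Fin 4) : A) = y from rfl,
            map_mul, map_add, map_sub, map_pow, map_ofNat, ιX0, ιX1, h, g]
          ring
      · -- multiply by z
        exact ⟨X 1 * a0, X 1 * a1, X 1 * a2, X 1 * a3, X 1 * a4, X 1 * a5, q * z,
          Ideal.mul_mem_right _ _ hq,
          by simp only [show (X (⟨2, by omega⟩ : Fin 4) : A) = z from rfl, map_mul, ιX1]; ring⟩
      · -- multiply by t
        refine ⟨(X 1^3 - X 0^3 * X 1) * a4, -(X 0^2 * X 1) * a2 + X 1^3 * a5,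
          -(X 0^2 * X 1) * a3, 0,
          a0 + X 0 * X 1 * a2 - X 0^2 * X 1 * a5,
          a1 + X 0 * X 1 * a3 - X 0 * a4,
          q * t + ι a2 * g + ι a3 * y * g + ι a4 * f - ι a5 * q23,
          ?_, ?_⟩
        · exact I0.sub_mem
            (I0.add_mem (I0.add_mem (I0.add_mem (Ideal.mul_mem_right _ _ hq)
              (Ideal.mul_mem_left _ _ gI)) (Ideal.mul_mem_left _ (ι a3 * y) gI))
              (Ideal.mul_mem_left _ _ fI))
            (Ideal.mul_mem_left _ _ q23I)
        · simp only [show (X (⟨3, by omega⟩ : Fin 4) : A) = t from rfl,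
            map_mul, map_add, map_sub, map_neg, map_pow, map_zero, ιX0, ιX1, f, g, q23]
          ring


lemma key_even (v00 v10 v20 v30 v01 v11 μ ν ν' : ℂ) (hμ0 : μ ≠ 0)
    (hν' : ν'^2 = 2*μ^3 + ν^2)
    (e1 : v00 + v10*(μ*ν) + v20*(μ*ν)^2 + v30*(μ*ν)^3 + v01*(μ^3*ν+ν^3)
        + v11*((μ*ν)*(μ^3*ν+ν^3)) = 0)
    (e2 : v00 + v10*(μ*(-ν)) + v20*(μ*(-ν))^2 + v30*(μ*(-ν))^3 + v01*(μ^3*(-ν)+(-ν)^3)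
        + v11*((μ*(-ν))*(μ^3*(-ν)+(-ν)^3)) = 0)
    (e3 : v00 + v10*((-μ)*ν') + v20*((-μ)*ν')^2 + v30*((-μ)*ν')^3 + v01*((-μ)^3*ν'+ν'^3)
        + v11*(((-μ)*ν')*((-μ)^3*ν'+ν'^3)) = 0)
    (e4 : v00 + v10*((-μ)*(-ν')) + v20*((-μ)*(-ν'))^2 + v30*((-μ)*(-ν'))^3
        + v01*((-μ)^3*(-ν')+(-ν')^3) + v11*(((-μ)*(-ν'))*((-μ)^3*(-ν')+(-ν')^3)) = 0) :
    v00 + v20*(μ^2*(μ^3+ν^2)) - v11*(μ^4*(μ^3+ν^2)) = 0 ∧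
    -(v20*μ^4) + v11*(μ^3+ν^2)^2 = 0 := by
  have E1 : v00 + v20*(μ^2*ν^2) + v11*(μ*ν^2*(μ^3+ν^2)) = 0 := by
    linear_combination (e1 + e2)/2
  have E2 : v00 + v20*(μ^2*ν'^2) - v11*(μ*ν'^2*(ν'^2 - μ^3)) = 0 := by
    linear_combination (e3 + e4)/2
  constructor
  · linear_combination (E1+E2)/2 + (-(v20*μ^2)/2 + v11*μ*(ν'^2 + ν^2 + μ^3)/2) * hν'
  · have c2' : μ * (-(v20*μ^4) + v11*(μ^3+ν^2)^2) = 0 := by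
      linear_combination (E1-E2)/2 + (v20*μ^2/2 - v11*μ*(ν'^2 + ν^2 + μ^3)/2) * hν'
    rcases mul_eq_zero.mp c2' with hc | hc
    · exact absurd hc hμ0
    · exact hc

lemma key_odd (v00 v10 v20 v30 v01 v11 μ ν ν' : ℂ) (hμ0 : μ ≠ 0) (hν0 : ν ≠ 0) (hν'0 : ν' ≠ 0)
    (hν' : ν'^2 = 2*μ^3 + ν^2)
    (e1 : v00 + v10*(μ*ν) + v20*(μ*ν)^2 + v30*(μ*ν)^3 + v01*(μ^3*ν+ν^3)
        + v11*((μ*ν)*(μ^3*ν+ν^3)) = 0)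
    (e2 : v00 + v10*(μ*(-ν)) + v20*(μ*(-ν))^2 + v30*(μ*(-ν))^3 + v01*(μ^3*(-ν)+(-ν)^3)
        + v11*((μ*(-ν))*(μ^3*(-ν)+(-ν)^3)) = 0)
    (e3 : v00 + v10*((-μ)*ν') + v20*((-μ)*ν')^2 + v30*((-μ)*ν')^3 + v01*((-μ)^3*ν'+ν'^3)
        + v11*(((-μ)*ν')*((-μ)^3*ν'+ν'^3)) = 0)
    (e4 : v00 + v10*((-μ)*(-ν')) + v20*((-μ)*(-ν'))^2 + v30*((-μ)*(-ν'))^3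
        + v01*((-μ)^3*(-ν')+(-ν')^3) + v11*(((-μ)*(-ν'))*((-μ)^3*(-ν')+(-ν')^3)) = 0) :
    v01*(μ^3+ν^2) - v30*μ^6 = 0 ∧ v10 + v30*(μ^2*(μ^3+ν^2)) = 0 := by
  have O1 : ν*(μ*(v10 + v30*(μ^2*(μ^3+ν^2))) + (v01*(μ^3+ν^2) - v30*μ^6)) = 0 := by
    linear_combination (e1 - e2)/2
  have O2 : ν'*(-(μ*(v10 + v30*(μ^2*(μ^3+ν^2)))) + (v01*(μ^3+ν^2) - v30*μ^6)) = 0 := by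
    linear_combination (e3 - e4)/2 + (-ν'*(v01 - v30*μ^3)) * hν'
  have O1' := (mul_eq_zero.mp O1).resolve_left hν0
  have O2' := (mul_eq_zero.mp O2).resolve_left hν'0
  have hb : v01*(μ^3+ν^2) - v30*μ^6 = 0 := by linear_combination (O1' + O2')/2
  refine ⟨hb, ?_⟩
  have ha : μ * (v10 + v30*(μ^2*(μ^3+ν^2))) = 0 := by linear_combination (O1' - O2')/2
  exact (mul_eq_zero.mp ha).resolve_left hμ0


lemma primeX0 : Prime (X 0 : C2) := by
  rw [← MulEquiv.prime_iff (p := (X 0 : C2)) (MvPolynomial.finSuccEquiv ℂ 1).toMulEquiv]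
  show Prime (MvPolynomial.finSuccEquiv ℂ 1 (X 0))
  rw [MvPolynomial.finSuccEquiv_X_zero]
  exact Polynomial.prime_X

lemma primeX1 : Prime (X 1 : C2) := by
  rw [← MulEquiv.prime_iff (p := (X 1 : C2)) (MvPolynomial.renameEquiv ℂ (Equiv.swap (0 : Fin 2) 1)).toMulEquiv]
  show Prime (MvPolynomial.renameEquiv ℂ (Equiv.swap (0 : Fin 2) 1) (X 1))
  simp only [MvPolynomial.renameEquiv_apply, MvPolynomial.rename_X, Equiv.swap_apply_right]
  exact primeX0

lemma notdvd01 : ¬ (X 0 : C2) ∣ X 1 := by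
  rintro ⟨k, hk⟩
  have := congrArg (eval ![0, 1]) hk
  simp at this

lemma notdvd10 : ¬ (X 1 : C2) ∣ X 0 := by
  rintro ⟨k, hk⟩
  have := congrArg (eval ![1, 0]) hk
  simp at this

lemma X0_ne : (X 0 : C2) ≠ 0 := MvPolynomial.X_ne_zero _

lemma X1_ne : (X 1 : C2) ≠ 0 := MvPolynomial.X_ne_zero _

lemma curve_ne : (X 1^2 - X 0^3 : C2) ≠ 0 := by
  intro hh
  have h2 := congrArg (eval ![1, 0]) hh
  simp at h2

lemma vec2 (w : Fin 2 → ℂ) : ![w 0, w 1] = w := by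
  funext i; fin_cases i <;> simp

lemma eval_I0 (q : A) (hq : q ∈ I0) (μ ν : ℂ) :
    eval ![μ^2, μ*ν, μ^3+ν^2, μ^3*ν+ν^3] q = 0 := by
  rw [← eval_psi]
  have hker : ψ q = 0 := I0_le_ker hq
  rw [hker, map_zero]

theorem ker_le_I0 : RingHom.ker (ψ : A →+* B) ≤ I0 := by
  intro p hp
  have hψp : ψ p = 0 := hp
  obtain ⟨c00, c10, c20, c30, c01, c11, q, hq, hdecomp⟩ := std_all p
  have hpt : ∀ μ ν : ℂ,
      eval ![μ^2, μ^3+ν^2] c00 + eval ![μ^2, μ^3+ν^2] c10 * (μ*ν)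
      + eval ![μ^2, μ^3+ν^2] c20 * (μ*ν)^2 + eval ![μ^2, μ^3+ν^2] c30 * (μ*ν)^3
      + eval ![μ^2, μ^3+ν^2] c01 * (μ^3*ν+ν^3)
      + eval ![μ^2, μ^3+ν^2] c11 * ((μ*ν)*(μ^3*ν+ν^3)) = 0 := by
    intro μ ν
    have h0 : eval ![μ, ν] (ψ p) = 0 := by rw [hψp, map_zero]
    rw [eval_psi, hdecomp] at h0
    have hq0 := eval_I0 q hq μ ν
    simp only [map_add, map_mul, map_pow, eval_iota, eval_X, y, t,
      Matrix.cons_val_zero, Matrix.cons_val_one, Matrix.head_cons,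
      Matrix.cons_val_two, Matrix.cons_val_three, Matrix.tail_cons, hq0, add_zero] at h0
    linear_combination h0
  have main_even : ∀ X Z : ℂ, X ≠ 0 →
      (eval ![X, Z] c00 + eval ![X, Z] c20 * (X*Z) - eval ![X, Z] c11 * (X^2*Z) = 0 ∧
       -(eval ![X, Z] c20 * X^2) + eval ![X, Z] c11 * Z^2 = 0) := by
    intro X Z hX
    obtain ⟨μ, hμ⟩ := IsAlgClosed.exists_pow_nat_eq X (n := 2) (by norm_num)
    obtain ⟨ν, hν⟩ := IsAlgClosed.exists_pow_nat_eq (Z - μ^3) (n := 2) (by norm_num)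
    obtain ⟨ν', hν'⟩ := IsAlgClosed.exists_pow_nat_eq (Z + μ^3) (n := 2) (by norm_num)
    subst hμ
    have hμ0 : μ ≠ 0 := by intro h; exact hX (by rw [h]; ring)
    have hZ : Z = μ^3 + ν^2 := by linear_combination -hν
    subst hZ
    have hνn : ν'^2 = 2*μ^3 + ν^2 := by linear_combination hν'
    have e1 := hpt μ ν
    have e2 := hpt μ (-ν)
    rw [show ((-ν : ℂ))^2 = ν^2 from by ring] at e2
    have e3 := hpt (-μ) ν'
    rw [show ((-μ : ℂ))^2 = μ^2 from by ring,
      show ((-μ : ℂ))^3 + ν'^2 = μ^3 + ν^2 from by linear_combination hν'] at e3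
    have e4 := hpt (-μ) (-ν')
    rw [show ((-μ : ℂ))^2 = μ^2 from by ring,
      show ((-μ : ℂ))^3 + (-ν')^2 = μ^3 + ν^2 from by linear_combination hν'] at e4
    obtain ⟨k1, k2⟩ := key_even _ _ _ _ _ _ μ ν ν' hμ0 hνn e1 e2 e3 e4
    constructor
    · linear_combination k1
    · linear_combination k2
  have main_odd : ∀ X Z : ℂ, X ≠ 0 → Z^2 ≠ X^3 →
      (eval ![X, Z] c01 * Z - eval ![X, Z] c30 * X^3 = 0 ∧
       eval ![X, Z] c10 + eval ![X, Z] c30 * (X*Z) = 0) := by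
    intro X Z hX hcurve
    obtain ⟨μ, hμ⟩ := IsAlgClosed.exists_pow_nat_eq X (n := 2) (by norm_num)
    obtain ⟨ν, hν⟩ := IsAlgClosed.exists_pow_nat_eq (Z - μ^3) (n := 2) (by norm_num)
    obtain ⟨ν', hν'⟩ := IsAlgClosed.exists_pow_nat_eq (Z + μ^3) (n := 2) (by norm_num)
    subst hμ
    have hμ0 : μ ≠ 0 := by intro h; exact hX (by rw [h]; ring)
    have hZ : Z = μ^3 + ν^2 := by linear_combination -hν
    subst hZ
    have hνn : ν'^2 = 2*μ^3 + ν^2 := by linear_combination hν'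
    have hν0 : ν ≠ 0 := by
      intro h; apply hcurve; rw [h]; ring
    have hν'0 : ν' ≠ 0 := by
      intro h; apply hcurve; rw [h] at hν'
      linear_combination (-(ν^2)) * hν'
    have e1 := hpt μ ν
    have e2 := hpt μ (-ν)
    rw [show ((-ν : ℂ))^2 = ν^2 from by ring] at e2
    have e3 := hpt (-μ) ν'
    rw [show ((-μ : ℂ))^2 = μ^2 from by ring,
      show ((-μ : ℂ))^3 + ν'^2 = μ^3 + ν^2 from by linear_combination hν'] at e3
    have e4 := hpt (-μ) (-ν')
    rw [show ((-μ : ℂ))^2 = μ^2 from by ring,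
      show ((-μ : ℂ))^3 + (-ν')^2 = μ^3 + ν^2 from by linear_combination hν'] at e4
    obtain ⟨k1, k2⟩ := key_odd _ _ _ _ _ _ μ ν ν' hμ0 hν0 hν'0 hνn e1 e2 e3 e4
    constructor
    · linear_combination k1
    · linear_combination k2
  -- polynomial identities
  have Q1 : c00 + X 0 * X 1 * c20 - X 0^2 * X 1 * c11 = 0 := by
    have hz : (X 0 : C2) * (c00 + X 0 * X 1 * c20 - X 0^2 * X 1 * c11) = 0 := by
      apply MvPolynomial.funext
      intro w
      rw [map_zero]
      simp only [map_mul, map_sub, map_add, map_pow, eval_X]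
      by_cases h0 : w 0 = 0
      · rw [h0]; ring
      · have hme := (main_even (w 0) (w 1) h0).1
        rw [vec2 w] at hme
        linear_combination (w 0) * hme
    exact (mul_eq_zero.mp hz).resolve_left X0_ne
  have Q2 : (X 1 : C2)^2 * c11 - X 0^2 * c20 = 0 := by
    have hz : (X 0 : C2) * ((X 1)^2 * c11 - X 0^2 * c20) = 0 := by
      apply MvPolynomial.funext
      intro w
      rw [map_zero]
      simp only [map_mul, map_sub, map_add, map_pow, eval_X]
      by_cases h0 : w 0 = 0
      · rw [h0]; ring
      · have hme := (main_even (w 0) (w 1) h0).2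
        rw [vec2 w] at hme
        linear_combination (w 0) * hme
    exact (mul_eq_zero.mp hz).resolve_left X0_ne
  have Q3 : (X 1 : C2) * c01 - X 0^3 * c30 = 0 := by
    have hz : ((X 0 : C2) * (X 1^2 - X 0^3)) * (X 1 * c01 - X 0^3 * c30) = 0 := by
      apply MvPolynomial.funext
      intro w
      rw [map_zero]
      simp only [map_mul, map_sub, map_add, map_pow, eval_X]
      by_cases h0 : w 0 = 0
      · rw [h0]; ring
      · by_cases hc : (w 1)^2 = (w 0)^3
        · rw [hc]; ring
        · have hmo := (main_odd (w 0) (w 1) h0 hc).1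
          rw [vec2 w] at hmo
          linear_combination (w 0 * ((w 1)^2 - (w 0)^3)) * hmo
    exact (mul_eq_zero.mp hz).resolve_left (mul_ne_zero X0_ne curve_ne)
  have Q4 : c10 + X 0 * X 1 * c30 = 0 := by
    have hz : ((X 0 : C2) * (X 1^2 - X 0^3)) * (c10 + X 0 * X 1 * c30) = 0 := by
      apply MvPolynomial.funext
      intro w
      rw [map_zero]
      simp only [map_mul, map_sub, map_add, map_pow, eval_X]
      by_cases h0 : w 0 = 0
      · rw [h0]; ring
      · by_cases hc : (w 1)^2 = (w 0)^3
        · rw [hc]; ring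
        · have hmo := (main_odd (w 0) (w 1) h0 hc).2
          rw [vec2 w] at hmo
          linear_combination (w 0 * ((w 1)^2 - (w 0)^3)) * hmo
    exact (mul_eq_zero.mp hz).resolve_left (mul_ne_zero X0_ne curve_ne)
  -- divisibility: even part
  have n10 : ¬ (X 1 : C2) ∣ X 0^2 := by
    intro hd
    rcases (primeX1.2.2 _ _ (by rwa [sq] at hd)) with hdd | hdd <;> exact notdvd10 hdd
  have hd1 : (X 1 : C2) ∣ X 0^2 * c20 :=
    ⟨X 1 * c11, by linear_combination -Q2⟩
  obtain ⟨d, hd⟩ := (primeX1.2.2 _ _ hd1).resolve_left n10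
  have hstep : (X 1 : C2) * (X 1 * c11) = X 1 * (X 0^2 * d) := by
    linear_combination Q2 + (X 0)^2 * hd
  have hstep2 : (X 1 : C2) * c11 = X 0^2 * d := mul_left_cancel₀ X1_ne hstep
  have hd2 : (X 1 : C2) ∣ X 0^2 * d := ⟨c11, hstep2.symm⟩
  obtain ⟨W, hW⟩ := (primeX1.2.2 _ _ hd2).resolve_left n10
  have hc20 : c20 = X 1^2 * W := by rw [hd, hW]; ring
  have hc11 : c11 = X 0^2 * W := by
    apply mul_left_cancel₀ X1_ne
    rw [hstep2, hW]; ring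
  -- divisibility: odd part
  have n01 : ¬ (X 0 : C2) ∣ X 1 := notdvd01
  have ho1 : (X 0 : C2) ∣ X 1 * c01 := ⟨X 0^2 * c30, by linear_combination Q3⟩
  obtain ⟨r1, hr1⟩ := (primeX0.2.2 _ _ ho1).resolve_left n01
  have hstepo : (X 0 : C2) * (X 1 * r1) = X 0 * (X 0^2 * c30) := by
    linear_combination Q3 - X 1 * hr1
  have hstepo2 : (X 1 : C2) * r1 = X 0^2 * c30 := mul_left_cancel₀ X0_ne hstepo
  have ho2 : (X 0 : C2) ∣ X 1 * r1 := ⟨X 0 * c30, by linear_combination hstepo2⟩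
  obtain ⟨r2, hr2⟩ := (primeX0.2.2 _ _ ho2).resolve_left n01
  have hstepo3 : (X 0 : C2) * (X 1 * r2) = X 0 * (X 0 * c30) := by
    linear_combination hstepo2 - X 1 * hr2
  have hstepo4 : (X 1 : C2) * r2 = X 0 * c30 := mul_left_cancel₀ X0_ne hstepo3
  have ho3 : (X 0 : C2) ∣ X 1 * r2 := ⟨c30, hstepo4⟩
  obtain ⟨R, hR⟩ := (primeX0.2.2 _ _ ho3).resolve_left n01
  have hc30 : c30 = X 1 * R := by
    apply mul_left_cancel₀ X0_ne
    rw [← hstepo4, hR]; ring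
  have hc01 : c01 = X 0^3 * R := by rw [hr1, hr2, hR]; ring
  have hc10 : c10 = -(X 0 * X 1^2 * R) := by
    linear_combination Q4 - (X 0 * X 1) * hc30
  have hc00 : c00 = -(X 0 * X 1^3 * W) + X 0^4 * X 1 * W := by
    linear_combination Q1 - (X 0 * X 1) * hc20 + X 0^2 * X 1 * hc11
  -- final assembly
  have hpeq : p = ι W * (x * f + q22) + ι R * q21 + q := by
    rw [hdecomp, hc00, hc10, hc20, hc30, hc01, hc11]
    simp only [map_mul, map_add, map_sub, map_neg, map_pow, ιX0, ιX1, f, q21, q22]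
    ring
  rw [hpeq]
  refine I0.add_mem (I0.add_mem ?_ (Ideal.mul_mem_left _ _ q21I)) hq
  have hsplit : ι W * (x * f + q22) = (ι W * x) * f + ι W * q22 := by ring
  rw [hsplit]
  exact I0.add_mem (Ideal.mul_mem_left _ _ fI) (Ideal.mul_mem_left _ _ q22I)

theorem ker_psi_eq_span :
    RingHom.ker (ψ : A →+* B) = Ideal.span {f, g, h, q21, q22, q23} :=
  le_antisymm ker_le_I0 I0_le_ker

end Reid
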